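/- arXiv:2602.05462 — 7 statements merged into one kernel-verified Lean document; each statement's English description precedes it below -/
import Mathlib

section
/- Let f ∈ 𝔽_{q^m}^{k₁} and g ∈ 𝔽_{q^m}^{k₂} be coefficient vectors of skew polynomials, and let a, β ∈ 𝔽_{q^m}. Then the product rule (f·g)(β)_a = f( g(β)_a )_a holds, where f·g is the skew product and all evaluations are generalized operator evaluations with respect to a. -/
noncomputable section

open Finset

variable {F : Type*} [Field F]

/-- Generalized power function `N_i(a) = ∏_{j<i} σ^j(a)` where `σ(x) = x^e`. -/
def genNorm (e : ℕ) (a : F) (i : ℕ) : F :=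
  ∏ j ∈ Finset.range i, a ^ e ^ j

/-- Generalized operator evaluation of the skew polynomial with coefficient
vector `f` at `b` with respect to `a`, where `σ(x) = x^e`. -/
def opEval (e : ℕ) {k : ℕ} (f : Fin k → F) (a b : F) : F :=
  ∑ i : Fin k, f i * b ^ e ^ (i : ℕ) * genNorm e a i

/-- A coefficient vector as a function `ℕ → F` (zero beyond the length). -/
def coeffFn {k : ℕ} (f : Fin k → F) : ℕ → F :=
  fun i => if h : i < k then f ⟨i, h⟩ else 0

/-- Skew product of coefficient sequences: `(f·g)_n = Σ_{i+j=n} f_i · σ^i(g_j)`,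
where `σ(x) = x^e`. -/
def skewMul (e : ℕ) (f g : ℕ → F) : ℕ → F :=
  fun n => ∑ i ∈ Finset.range (n + 1), f i * g (n - i) ^ e ^ i

/-- `a` and `b` are σ-conjugate, where `σ(x) = x^e`. -/
def IsSigmaConj (e : ℕ) (a b : F) : Prop :=
  ∃ c : F, c ≠ 0 ∧ b = c ^ e * a * c⁻¹

/-- `γ` is a generator of the multiplicative group of `F`. -/
def IsPrimitive (γ : F) : Prop :=
  ∀ x : F, x ≠ 0 → ∃ i : ℕ, γ ^ i = x

/-- Generalized operator evaluation of an `ℕ`-indexed coefficient sequence,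
truncated at length `K`. -/
def opEvalN (e K : ℕ) (f : ℕ → F) (a b : F) : F :=
  ∑ i ∈ Finset.range K, f i * b ^ e ^ i * genNorm e a i

/-- Entry `c` of the `λ × η` matrix `Y` flattened column-wise:
row `c % λ`, column `c / λ`. -/
def matEnt {lam eta : ℕ} (Y : Matrix (Fin lam) (Fin eta) F) (c : ℕ) : F :=
  if h : c % lam < lam ∧ c / lam < eta then Y ⟨c % lam, h.1⟩ ⟨c / lam, h.2⟩ else 0

/-- The `i`-th block of the `λ`-folded linearized Reed–Solomon codeword of `f`:
entry in row `u`, column `v` is `f(γ^{vλ+u})_a`. -/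
def flrsWord (e : ℕ) {k : ℕ} (f : Fin k → F) (γ : F) (lam eta : ℕ) (a : F) :
    Matrix (Fin lam) (Fin eta) F :=
  Matrix.of fun u v => opEval e f a (γ ^ ((v : ℕ) * lam + (u : ℕ)))

lemma tri_sum {M : Type*} [AddCommMonoid M] (K : ℕ) (H : ℕ → ℕ → M) :
    ∑ n ∈ range K, ∑ i ∈ range (n + 1), H i (n - i)
      = ∑ i ∈ range K, ∑ j ∈ range (K - i), H i j := by
  induction K with
  | zero => simp
  | succ K ih =>
    have h1 : ∀ i ∈ range K, ∑ j ∈ range (K + 1 - i), H i j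
        = (∑ j ∈ range (K - i), H i j) + H i (K - i) := by
      intro i hi
      have hi' := Finset.mem_range.mp hi
      have h : K + 1 - i = (K - i) + 1 := by omega
      rw [h, Finset.sum_range_succ]
    have hR : ∑ i ∈ range (K + 1), ∑ j ∈ range (K + 1 - i), H i j
        = (∑ i ∈ range K, ∑ j ∈ range (K - i), H i j)
          + ((∑ i ∈ range K, H i (K - i)) + H K 0) := by
      rw [Finset.sum_range_succ, Finset.sum_congr rfl h1, Finset.sum_add_distrib]
      simp [add_assoc]
    rw [hR, Finset.sum_range_succ, ih, Finset.sum_range_succ, Nat.sub_self]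

lemma genNorm_add (e : ℕ) (a : F) (i j : ℕ) :
    genNorm e a (i + j) = genNorm e a i * (genNorm e a j) ^ e ^ i := by
  unfold genNorm
  rw [Finset.prod_range_add, ← Finset.prod_pow]
  congr 1
  refine Finset.prod_congr rfl fun t _ => ?_
  rw [← pow_mul, ← pow_add, add_comm]

/-- Product rule for generalized operator evaluation of the
skew product: `(f·g)(β)_a = f(g(β)_a)_a`. -/
theorem skewMul_opEval_product_rule
    {F : Type*} [Field F] [Fintype F]
    (q m : ℕ) (hq : IsPrimePow q) (hm : 1 ≤ m)
    (hcard : Fintype.card F = q ^ m)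
    (k₁ k₂ : ℕ) (hk₁ : 1 ≤ k₁) (hk₂ : 1 ≤ k₂)
    (f : Fin k₁ → F) (g : Fin k₂ → F) (a β : F) :
    opEvalN q (k₁ + k₂ - 1) (skewMul q (coeffFn f) (coeffFn g)) a β
      = opEval q f a (opEval q g a β) := by
  classical
  obtain ⟨p, s, hpp, hs, hqe⟩ := hq
  have hp : p.Prime := Nat.prime_iff.mpr hpp
  -- identify the characteristic
  haveI : CharP F (ringChar F) := ringChar.charP F
  obtain ⟨n, hrp, hc⟩ := FiniteField.card F (ringChar F)
  have hpr : p = ringChar F := by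
    have hdvd : p ∣ (ringChar F) ^ (n : ℕ) := by
      rw [← hc, hcard, ← hqe, ← pow_mul]
      exact dvd_pow_self p (by positivity)
    exact (Nat.prime_dvd_prime_iff_eq hp hrp).mp (hp.dvd_of_dvd_pow hdvd)
  haveI : CharP F p := hpr ▸ ringChar.charP F
  haveI : ExpChar F p := ExpChar.prime hp
  -- Frobenius is additive on sums
  have hfrob : ∀ (i : ℕ) {ι : Type} (t : Finset ι) (h : ι → F),
      (∑ x ∈ t, h x) ^ q ^ i = ∑ x ∈ t, (h x) ^ q ^ i := by
    intro i ι t h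
    have hqi : q ^ i = p ^ (s * i) := by rw [← hqe, ← pow_mul]
    rw [hqi]
    simpa only [iterateFrobenius_def] using map_sum (iterateFrobenius F p (s * i)) h t
  set K := k₁ + k₂ - 1 with hK
  set H : ℕ → ℕ → F := fun i j =>
    coeffFn f i * (coeffFn g j) ^ q ^ i * β ^ q ^ (i + j) * genNorm q a (i + j) with hH
  -- LHS
  have hL : opEvalN q K (skewMul q (coeffFn f) (coeffFn g)) a β
      = ∑ i ∈ range K, ∑ j ∈ range (K - i), H i j := by
    rw [← tri_sum]
    unfold opEvalN skewMul
    refine Finset.sum_congr rfl fun n _ => ?_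
    rw [Finset.sum_mul, Finset.sum_mul]
    refine Finset.sum_congr rfl fun i hi => ?_
    have hin : i + (n - i) = n := by
      have := Finset.mem_range.mp hi; omega
    rw [hH]
    simp only [hin]
  -- RHS
  have hR : opEval q f a (opEval q g a β)
      = ∑ i ∈ range k₁, ∑ j ∈ range k₂, H i j := by
    unfold opEval
    have hterm : ∀ i : Fin k₁,
        f i * (∑ j : Fin k₂, g j * β ^ q ^ (j : ℕ) * genNorm q a (j : ℕ)) ^ q ^ (i : ℕ)
            * genNorm q a (i : ℕ)
          = ∑ j ∈ range k₂, H (i : ℕ) j := by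
      intro i
      rw [hfrob, Finset.mul_sum, Finset.sum_mul,
        ← Fin.sum_univ_eq_sum_range (fun j => H (i : ℕ) j) k₂]
      refine Finset.sum_congr rfl fun j _ => ?_
      rw [hH]
      simp only [coeffFn, i.isLt, j.isLt, dif_pos, Fin.eta]
      rw [mul_pow, mul_pow, ← pow_mul, ← pow_add, add_comm (j : ℕ) (i : ℕ), genNorm_add]
      ring
    rw [Finset.sum_congr rfl (fun i _ => hterm i)]
    exact Fin.sum_univ_eq_sum_range (fun i => ∑ j ∈ range k₂, H i j) k₁
  -- combine
  have hq0 : q ≠ 0 := by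
    rw [← hqe]; exact pow_ne_zero _ hp.pos.ne'
  have hqi0 : ∀ i : ℕ, q ^ i ≠ 0 := fun i => pow_ne_zero _ hq0
  have hzero : ∀ i j : ℕ, (¬ i < k₁ ∨ ¬ j < k₂) → H i j = 0 := by
    intro i j hij
    rw [hH]
    rcases hij with h | h
    · simp [coeffFn, h]
    · simp [coeffFn, h, zero_pow (hqi0 i)]
  rw [hL, hR]
  have hk₁K : k₁ ≤ K := by omega
  rw [← Finset.sum_subset (Finset.range_subset_range.mpr hk₁K) ?h0]
  case h0 =>
    intro i _ hi
    exact Finset.sum_eq_zero fun j _ => hzero i j (Or.inl (by simpa using hi))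
  refine Finset.sum_congr rfl fun i hi => ?_
  have hik : i < k₁ := Finset.mem_range.mp hi
  have hsub : range k₂ ⊆ range (K - i) := Finset.range_subset_range.mpr (by omega)
  rw [← Finset.sum_subset hsub fun j _ hj =>
    hzero i j (Or.inr (by simpa using hj))]
end
end

section
/- Let q be a prime power and s, A, m, n, k positive integers, and set V := 𝔽_{q^n}^m, regarded also as an 𝔽_q-vector space of dimension mn. Let H_1,…,H_k be 𝔽_q-linear subspaces of V such that for every 𝔽_{q^n}-linear subspace W ⊆ V with dim_{𝔽_{q^n}} W ≤ s one has Σ_{i=1}^k dim_{𝔽_q}(H_i ∩ W) ≤ A. Let H ⊆ V^k be an (s,m,k)-periodic affine subspace over 𝔽_{q^n}. Then H ∩ (H_1 × ⋯ × H_k) is an affine 𝔽_q-subspace of V^k of 𝔽_q-dimension at most A; in particular it has at most q^A elements. -/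
noncomputable section

open Finset

variable {F : Type*} [Field F]

/-- Intersecting an `(s,m,k)`-periodic affine subspace with a
product of subspaces from an `(s,A,n)` subspace design gives an affine
`𝔽_q`-subspace of dimension at most `A`, hence of size at most `q^A`. -/
theorem periodic_inter_subspace_design
    {Fq Fqn : Type*} [Field Fq] [Field Fqn] [Algebra Fq Fqn] [Fintype Fq] [Fintype Fqn]
    (q s A m n k : ℕ) (hq : IsPrimePow q)
    (hs : 1 ≤ s) (hA : 1 ≤ A) (hm : 1 ≤ m) (hn : 1 ≤ n) (hk : 1 ≤ k)
    (hcardq : Fintype.card Fq = q) (hcardqn : Fintype.card Fqn = q ^ n)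
    (H : Fin k → Submodule Fq (Fin m → Fqn))
    (hdesign : ∀ W : Submodule Fqn (Fin m → Fqn), Module.finrank Fqn W ≤ s →
      ∑ i, Module.finrank Fq ↥(H i ⊓ W.restrictScalars Fq) ≤ A)
    (S : Set (Fin k → Fin m → Fqn))
    (haff : ∃ (v : Fin k → Fin m → Fqn) (U : Submodule Fqn (Fin k → Fin m → Fqn)),
      S = {x | x - v ∈ U})
    (hper : ∃ W0 : Submodule Fqn (Fin m → Fqn), Module.finrank Fqn W0 ≤ s ∧
      ∀ j : Fin k, ∀ x ∈ S, ∀ x' ∈ S,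
        (∀ i : Fin k, i < j → x i = x' i) → x j - x' j ∈ W0)
    (T : Set (Fin k → Fin m → Fqn)) (hT : T = S ∩ {x | ∀ i, x i ∈ H i}) :
    (T = ∅ ∨ ∃ (v : Fin k → Fin m → Fqn) (U : Submodule Fq (Fin k → Fin m → Fqn)),
        Module.finrank Fq U ≤ A ∧ T = {x | x - v ∈ U}) ∧
    T.ncard ≤ q ^ A := by
    classical
  obtain ⟨v0, Uaff, hS⟩ := haff
  obtain ⟨W0, hW0s, hper0⟩ := hper
  have hq1 : 1 ≤ q := hq.pos
  rcases Set.eq_empty_or_nonempty T with hTe | ⟨v, hv⟩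
  · exact ⟨Or.inl hTe, by simp [hTe]⟩
  have hvS : v ∈ S := (hT ▸ hv).1
  have hvH : ∀ i, v i ∈ H i := (hT ▸ hv).2
  have hvU : v - v0 ∈ Uaff := by rw [hS] at hvS; exact hvS
  set U' : Submodule Fq (Fin k → Fin m → Fqn) :=
    (Uaff.restrictScalars Fq) ⊓ Submodule.pi Set.univ H with hU'
  have hmemU' : ∀ x, x ∈ U' ↔ x ∈ Uaff ∧ ∀ i, x i ∈ H i := by
    intro x
    simp [hU', Submodule.mem_inf, Submodule.mem_pi]
  have hTU : T = {x | x - v ∈ U'} := by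
    ext x
    rw [hT, hS]
    simp only [Set.mem_inter_iff, Set.mem_setOf_eq, hmemU']
    constructor
    · rintro ⟨hx0, hxH⟩
      constructor
      · have hx : x - v = (x - v0) - (v - v0) := by abel
        rw [hx]; exact Uaff.sub_mem hx0 hvU
      · intro i
        have := (H i).sub_mem (hxH i) (hvH i)
        simpa using this
    · rintro ⟨hx0, hxH⟩
      constructor
      · have hx : x - v0 = (x - v) + (v - v0) := by abel
        rw [hx]; exact Uaff.add_mem hx0 hvU
      · intro i
        have := (H i).add_mem (hxH i) (hvH i)
        simpa using this
  -- key: prefix-zero elements of U' land in W0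
  have hUW : ∀ u ∈ U', ∀ j : Fin k, (∀ i : Fin k, i < j → u i = 0) → u j ∈ W0 := by
    intro u hu j hpre
    have hvu : v + u ∈ S := by
      have hmem : v + u ∈ T := by rw [hTU]; simpa using hu
      exact (hT ▸ hmem).1
    have := hper0 j (v + u) hvu v hvS (fun i hi => by simp [hpre i hi])
    simpa using this
  -- filtration
  set K : ℕ → Submodule Fq (Fin k → Fin m → Fqn) := fun j =>
    U' ⊓ (⨅ (i : Fin k) (_ : (i : ℕ) < j), LinearMap.ker (LinearMap.proj (R := Fq) i)) with hKdef
  have hmemK : ∀ j x, x ∈ K j ↔ x ∈ U' ∧ ∀ i : Fin k, (i : ℕ) < j → x i = 0 := by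
    intro j x
    simp [hKdef, Submodule.mem_inf, Submodule.mem_iInf, LinearMap.mem_ker]
  have hstep : ∀ j (hjk : j < k),
      Module.finrank Fq (K j) ≤
        Module.finrank Fq ↥(H ⟨j, hjk⟩ ⊓ W0.restrictScalars Fq) +
          Module.finrank Fq (K (j + 1)) := by
    intro j hjk
    set ψ : K j →ₗ[Fq] (Fin m → Fqn) :=
      (LinearMap.proj (⟨j, hjk⟩ : Fin k)).comp (K j).subtype with hψ
    have hrange : LinearMap.range ψ ≤ H ⟨j, hjk⟩ ⊓ W0.restrictScalars Fq := by
      rintro y ⟨⟨u, hu⟩, rfl⟩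
      rw [hmemK] at hu
      refine Submodule.mem_inf.2 ⟨((hmemU' u).1 hu.1).2 _, ?_⟩
      exact hUW u hu.1 ⟨j, hjk⟩ (fun i hi => hu.2 i hi)
    have hle : K (j + 1) ≤ K j := by
      intro x hx
      rw [hmemK] at hx ⊢
      exact ⟨hx.1, fun i hi => hx.2 i (Nat.lt_succ_of_lt hi)⟩
    have hker : LinearMap.ker ψ = (K (j + 1)).comap (K j).subtype := by
      ext ⟨u, hu⟩
      have hu' := (hmemK j u).1 hu
      simp only [LinearMap.mem_ker, Submodule.mem_comap, Submodule.subtype_apply, hψ,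
        LinearMap.comp_apply, LinearMap.proj_apply]
      rw [hmemK]
      constructor
      · intro h0
        refine ⟨hu'.1, fun i hi => ?_⟩
        rcases Nat.lt_succ_iff_lt_or_eq.1 hi with hi' | hi'
        · exact hu'.2 i hi'
        · have : i = (⟨j, hjk⟩ : Fin k) := Fin.ext hi'
          rw [this]; exact h0
      · intro h
        exact h.2 ⟨j, hjk⟩ (Nat.lt_succ_self j)
    have hrn := LinearMap.finrank_range_add_finrank_ker ψ
    have h1 : Module.finrank Fq (LinearMap.range ψ) ≤
        Module.finrank Fq ↥(H ⟨j, hjk⟩ ⊓ W0.restrictScalars Fq) :=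
      Submodule.finrank_mono hrange
    have h2 : Module.finrank Fq (LinearMap.ker ψ) = Module.finrank Fq (K (j + 1)) := by
      rw [hker]
      exact LinearEquiv.finrank_eq (Submodule.comapSubtypeEquivOfLe hle)
    omega
  -- telescoping
  set D : ℕ → ℕ := fun i =>
    if h : i < k then Module.finrank Fq ↥(H ⟨i, h⟩ ⊓ W0.restrictScalars Fq) else 0 with hD
  have hchain : ∀ d j, j + d = k →
      Module.finrank Fq (K j) ≤ ∑ i ∈ Finset.Ico j k, D i := by
    intro d
    induction d with
    | zero =>
      intro j hj
      have hjk : j = k := by omega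
      have hbot : K j = ⊥ := by
        rw [eq_bot_iff]
        intro x hx
        rw [hmemK] at hx
        have : x = 0 := funext fun i => hx.2 i (by omega)
        simp [this]
      subst hjk
      simp [hbot]
    | succ d ih =>
      intro j hj
      have hjk : j < k := by omega
      have hsum : ∑ i ∈ Finset.Ico j k, D i = D j + ∑ i ∈ Finset.Ico (j + 1) k, D i :=
        Finset.sum_eq_sum_Ico_succ_bot hjk D
      have hDj : D j = Module.finrank Fq ↥(H ⟨j, hjk⟩ ⊓ W0.restrictScalars Fq) := by
        simp [hD, hjk]
      have := hstep j hjk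
      have := ih (j + 1) (by omega)
      omega
  have hK0 : K 0 = U' := by
    ext x
    rw [hmemK]
    simp
  have hsumA : ∑ i ∈ Finset.Ico 0 k, D i ≤ A := by
    have heq : ∑ i ∈ Finset.Ico 0 k, D i =
        ∑ i : Fin k, Module.finrank Fq ↥(H i ⊓ W0.restrictScalars Fq) := by
      rw [← Finset.range_eq_Ico, ← Fin.sum_univ_eq_sum_range]
      refine Finset.sum_congr rfl fun i _ => ?_
      simp [hD, i.isLt]
    rw [heq]
    exact hdesign W0 hW0s
  have hdim : Module.finrank Fq U' ≤ A := by
    have := hchain k 0 (by omega)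
    rw [hK0] at this
    omega
  -- cardinality
  have hTimg : T = (fun u => u + v) '' (U' : Set (Fin k → Fin m → Fqn)) := by
    rw [hTU]
    ext x
    simp only [Set.mem_setOf_eq, Set.mem_image, SetLike.mem_coe]
    constructor
    · intro hx; exact ⟨x - v, hx, by abel⟩
    · rintro ⟨u, hu, rfl⟩; simpa using hu
  haveI : Fintype ↥U' := Fintype.ofFinite _
  have hcardU : Fintype.card ↥U' = q ^ Module.finrank Fq U' := by
    rw [Module.card_eq_pow_finrank (K := Fq) (V := ↥U'), hcardq]
  have hTcard : T.ncard = q ^ Module.finrank Fq U' := by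
    rw [hTimg, Set.ncard_image_of_injective _ (add_left_injective v)]
    rw [← hcardU]
    rw [← Nat.card_coe_set_eq, Nat.card_eq_fintype_card]
    exact Fintype.card_congr (Equiv.setCongr rfl)
  refine ⟨Or.inr ⟨v, U', hdim, hTU⟩, ?_⟩
  rw [hTcard]
  exact Nat.pow_le_pow_right hq1 hdim
end
end

section
/- Let ℓ ≥ 1 and n_1,…,n_ℓ ≥ 1 with n := n_1 + ⋯ + n_ℓ (and t = nm). Let a_1,…,a_ℓ ∈ F, β_{i,j} ∈ F and y_{i,j} ∈ F (1 ≤ i ≤ ℓ, 1 ≤ j ≤ n_i) be arbitrary, let 1 ≤ k ≤ n and s ≥ 1, and set D := ⌊(n−k+1)/(s+1)⌋. Then there exist coefficient vectors Q_0 ∈ F^{D+k} and Q_1,…,Q_s ∈ F^{D+1}, not all zero, such that Q_0(β_{i,j})_{a_i} + Σ_{r=1}^{s} Q_r(y_{i,j}^{q^{r−1}})_{a_i} = 0 for all i and j. -/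
noncomputable section

open Finset

variable {F : Type*} [Field F]

lemma opEval_add' (e : ℕ) {k : ℕ} (f g : Fin k → F) (a b : F) :
    opEval e (f + g) a b = opEval e f a b + opEval e g a b := by
  simp [opEval, add_mul, Finset.sum_add_distrib]

lemma opEval_smul' (e : ℕ) {k : ℕ} (c : F) (f : Fin k → F) (a b : F) :
    opEval e (c • f) a b = c * opEval e f a b := by
  simp [opEval, Finset.mul_sum, mul_assoc]

/-- Existence of a nonzero interpolation skew polynomial
`Q = Q_0 + Q_1 y_1 + ⋯ + Q_s y_s` with `deg Q_0 ≤ D + k − 1`, `deg Q_r ≤ D`,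
vanishing at all interpolation constraints of the received word. -/
theorem lrs_interpolation_exists
    {F : Type*} [Field F] [Fintype F]
    (h n m : ℕ) (hh : IsPrimePow h) (hn : 1 ≤ n) (hm : 1 ≤ m)
    (hcard : Fintype.card F = h ^ (n * m))
    (ell : ℕ) (hell : 1 ≤ ell) (nn : Fin ell → ℕ) (hnn : ∀ i, 1 ≤ nn i)
    (hsum : n = ∑ i, nn i)
    (a : Fin ell → F) (β y : ∀ i, Fin (nn i) → F)
    (k s : ℕ) (hk1 : 1 ≤ k) (hkn : k ≤ n) (hs : 1 ≤ s) :
    ∃ (Q0 : Fin ((n - k + 1) / (s + 1) + k) → F)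
      (Q : Fin s → Fin ((n - k + 1) / (s + 1) + 1) → F),
      ¬(Q0 = 0 ∧ Q = 0) ∧
      ∀ i j, opEval h Q0 (a i) (β i j) +
          ∑ r : Fin s, opEval h (Q r) (a i) (y i j ^ (h ^ n) ^ (r : ℕ)) = 0 := by
  classical
  set D : ℕ := (n - k + 1) / (s + 1) with hD
  -- the linear map sending candidate coefficients to the constraint values
  let T : ((Fin (D + k) → F) × (Fin s → Fin (D + 1) → F)) →ₗ[F]
      ((Σ i : Fin ell, Fin (nn i)) → F) :=
    { toFun := fun p ij =>
        opEval h p.1 (a ij.1) (β ij.1 ij.2) +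
          ∑ r : Fin s, opEval h (p.2 r) (a ij.1) (y ij.1 ij.2 ^ (h ^ n) ^ (r : ℕ))
      map_add' := by
        intro p q
        funext ij
        simp only [Prod.fst_add, Prod.snd_add, Pi.add_apply, opEval_add',
          Finset.sum_add_distrib]
        ring
      map_smul' := by
        intro c p
        funext ij
        simp only [Prod.smul_fst, Prod.smul_snd, Pi.smul_apply, opEval_smul',
          RingHom.id_apply, smul_eq_mul, Finset.mul_sum, mul_add] }
  have hdom : Module.finrank F ((Fin (D + k) → F) × (Fin s → Fin (D + 1) → F))
      = (D + k) + s * (D + 1) := by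
    simp [Module.finrank_prod, Module.finrank_pi, Module.finrank_pi_fintype]
  have hcod : Module.finrank F ((Σ i : Fin ell, Fin (nn i)) → F) = n := by
    simp [Module.finrank_pi, hsum]
  have hdim : Module.finrank F ((Σ i : Fin ell, Fin (nn i)) → F)
      < Module.finrank F ((Fin (D + k) → F) × (Fin s → Fin (D + 1) → F)) := by
    rw [hdom, hcod]
    have h1 : (s + 1) * D + (n - k + 1) % (s + 1) = n - k + 1 := by
      rw [hD]; exact Nat.div_add_mod _ _
    have h2 : (n - k + 1) % (s + 1) < s + 1 := Nat.mod_lt _ (by omega)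
    have h4 : D + k + s * (D + 1) = (s + 1) * D + k + s := by ring
    omega
  have hnotinj : ¬ Function.Injective T := by
    intro hinj
    have := LinearMap.finrank_le_finrank_of_injective hinj
    omega
  rw [Function.not_injective_iff] at hnotinj
  obtain ⟨p, q, hpq, hne⟩ := hnotinj
  refine ⟨(p - q).1, (p - q).2, ?_, ?_⟩
  · rintro ⟨h1, h2⟩
    apply hne
    have e1 : p.1 = q.1 := sub_eq_zero.mp h1
    have e2 : p.2 = q.2 := sub_eq_zero.mp h2
    exact Prod.ext e1 e2
  · intro i j
    have : T (p - q) = 0 := by rw [map_sub, hpq, sub_self]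
    exact congrFun this ⟨i, j⟩
end
end

section
/- Let 1 ≤ s ≤ m and let Q_0, Q_1, …, Q_s be coefficient vectors over F, not all zero, and let k ≥ 1. Let Sol := { f ∈ F^k : Q_0 + Σ_{j=1}^{s} Q_j·f^{(q^{j−1})} = 0 }, where · denotes the skew product. Then Sol is either empty or a coset of an 𝔽_h-linear subspace of F^k, and there exists an 𝔽_q-linear subspace W ⊆ F with dim_{𝔽_q} W ≤ s − 1 such that for every r ∈ {0,…,k−1} and all f, f′ ∈ Sol with f_i = f′_i for all i < r, one has f_r − f′_r ∈ W; that is, Sol is an (s−1, m, k)-periodic subspace over 𝔽_q. -/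
noncomputable section

open Finset

variable {F : Type*} [Field F]

/-! ### Auxiliary definitions and lemmas -/

/-- The linear part of the key equation. -/
def keyE (h n : ℕ) {s k : ℕ} (K : Fin s → ℕ) (Q : ∀ j : Fin s, Fin (K j) → F)
    (f : Fin k → F) (r : ℕ) : F :=
  ∑ j : Fin s, skewMul h (coeffFn (Q j)) (coeffFn fun i => f i ^ (h ^ n) ^ (j : ℕ)) r

/-- The σ-linearized polynomial map controlling coordinate differences. -/
def keyL (h n istar : ℕ) {s : ℕ} (c : Fin s → F) (x : F) : F :=
  ∑ j : Fin s, c j * (x ^ (h ^ n) ^ (j : ℕ)) ^ h ^ istar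

lemma coeffFn_pow_sub {k : ℕ} (e : ℕ) (he : ∀ x y : F, (x - y) ^ e = x ^ e - y ^ e)
    (f f' : Fin k → F) (u : ℕ) :
    coeffFn (fun t => (f - f') t ^ e) u
      = coeffFn (fun t => f t ^ e) u - coeffFn (fun t => f' t ^ e) u := by
  unfold coeffFn
  by_cases hlt : u < k
  · simp only [dif_pos hlt, Pi.sub_apply]
    exact he _ _
  · simp [dif_neg hlt]

lemma keyE_sub (h n : ℕ) {s k : ℕ} (K : Fin s → ℕ) (Q : ∀ j : Fin s, Fin (K j) → F)
    (hsub : ∀ (N : ℕ) (x y : F), (x - y) ^ h ^ N = x ^ h ^ N - y ^ h ^ N)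
    (f f' : Fin k → F) (r : ℕ) :
    keyE h n K Q f r - keyE h n K Q f' r = keyE h n K Q (f - f') r := by
  unfold keyE skewMul
  rw [← Finset.sum_sub_distrib]
  refine Finset.sum_congr rfl fun j _ => ?_
  rw [← Finset.sum_sub_distrib]
  refine Finset.sum_congr rfl fun i _ => ?_
  have he : ∀ x y : F, (x - y) ^ (h ^ n) ^ (j : ℕ) = x ^ (h ^ n) ^ (j : ℕ) - y ^ (h ^ n) ^ (j : ℕ) := by
    intro x y
    have := hsub (n * (j : ℕ)) x y
    rwa [pow_mul] at this
  rw [coeffFn_pow_sub _ he, hsub i, mul_sub]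

lemma keyE_smul (h n : ℕ) {s k : ℕ} (K : Fin s → ℕ) (Q : ∀ j : Fin s, Fin (K j) → F)
    (c : F) (hc : ∀ N : ℕ, c ^ h ^ N = c)
    (f : Fin k → F) (r : ℕ) :
    keyE h n K Q (fun i => c * f i) r = c * keyE h n K Q f r := by
  unfold keyE skewMul
  rw [Finset.mul_sum]
  refine Finset.sum_congr rfl fun j _ => ?_
  rw [Finset.mul_sum]
  refine Finset.sum_congr rfl fun i _ => ?_
  have hco : coeffFn (fun t => (c * f t) ^ (h ^ n) ^ (j : ℕ)) (r - i)
      = c * coeffFn (fun t => f t ^ (h ^ n) ^ (j : ℕ)) (r - i) := by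
    unfold coeffFn
    by_cases hlt : r - i < k
    · simp only [dif_pos hlt, mul_pow]
      congr 1
      have := hc (n * (j : ℕ))
      rwa [pow_mul] at this
    · simp [dif_neg hlt]
  rw [hco, mul_pow, hc i]
  ring

/-- Structure of the solution space of the key equation: the
set of `f ∈ F^k` with `Q_0 + Σ_j Q_j · f^{(q^{j−1})} = 0` is empty or a coset of
an `𝔽_h`-subspace, and it is `(s−1, m, k)`-periodic over `𝔽_q`: there is an
`𝔽_q`-subspace `W ⊆ F` of dimension ≤ `s − 1` controlling each coordinate given
any fixed prefix. -/
theorem lrs_solution_space_periodic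
    {Fh Fq F : Type*} [Field Fh] [Field Fq] [Field F]
    [Algebra Fh Fq] [Algebra Fq F] [Algebra Fh F] [IsScalarTower Fh Fq F]
    [Fintype Fh] [Fintype Fq] [Fintype F]
    (h n m : ℕ) (hh : IsPrimePow h) (hn : 1 ≤ n) (hm : 1 ≤ m)
    (hcardh : Fintype.card Fh = h) (hcardq : Fintype.card Fq = h ^ n)
    (hcardF : Fintype.card F = h ^ (n * m))
    (s : ℕ) (hs1 : 1 ≤ s) (hsm : s ≤ m) (k : ℕ) (hk : 1 ≤ k)
    (K0 : ℕ) (Q0 : Fin K0 → F) (K : Fin s → ℕ) (Q : ∀ j : Fin s, Fin (K j) → F)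
    (hQ : ¬(coeffFn Q0 = 0 ∧ ∀ j, coeffFn (Q j) = 0))
    (Sol : Set (Fin k → F))
    (hSol : Sol = {f | ∀ r : ℕ, coeffFn Q0 r +
        ∑ j : Fin s,
          skewMul h (coeffFn (Q j)) (coeffFn fun i => f i ^ (h ^ n) ^ (j : ℕ)) r = 0}) :
    (Sol = ∅ ∨ ∃ (v : Fin k → F) (U : Submodule Fh (Fin k → F)),
        Sol = {f | f - v ∈ U}) ∧
    ∃ W : Submodule Fq F, Module.finrank Fq W ≤ s - 1 ∧
      ∀ r : Fin k, ∀ f ∈ Sol, ∀ f' ∈ Sol,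
        (∀ i : Fin k, (i : ℕ) < (r : ℕ) → f i = f' i) → f r - f' r ∈ W := by
  classical
  obtain ⟨p, a, hpp, ha, hpa⟩ := hh
  have hp' : p.Prime := hpp.nat_prime
  haveI : Fact p.Prime := ⟨hp'⟩
  have h2 : 2 ≤ h := by
    calc 2 ≤ p := hp'.two_le
    _ ≤ p ^ a := Nat.le_self_pow (by omega) p
    _ = h := hpa
  have hq2 : 2 ≤ h ^ n := le_trans h2 (Nat.le_self_pow (by omega) h)
  -- characteristic of F
  haveI hcharF : CharP F p := by
    obtain ⟨d, hrp, hcd⟩ := @FiniteField.card F _ _ (ringChar F) (ringChar.charP F)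
    have h1 : p ^ (a * (n * m)) = ringChar F ^ (d : ℕ) := by
      rw [pow_mul, hpa, ← hcardF, hcd]
    have hdvd : p ∣ ringChar F := by
      refine hp'.dvd_of_dvd_pow (n := (d : ℕ)) ?_
      rw [← h1]
      exact dvd_pow_self p (by positivity)
    have : p = ringChar F := (Nat.prime_dvd_prime_iff_eq hp' hrp).mp hdvd
    rw [this]; exact ringChar.charP F
  have hsub : ∀ (N : ℕ) (x y : F), (x - y) ^ h ^ N = x ^ h ^ N - y ^ h ^ N := by
    intro N x y
    rw [← hpa, ← pow_mul]
    exact sub_pow_char_pow x y (a * N)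
  have haddF : ∀ (N : ℕ) (x y : F), (x + y) ^ h ^ N = x ^ h ^ N + y ^ h ^ N := by
    intro N x y
    rw [← hpa, ← pow_mul]
    exact add_pow_char_pow x y p (a * N)
  have hFh : ∀ (c : Fh) (N : ℕ), (algebraMap Fh F c) ^ h ^ N = algebraMap Fh F c := by
    intro c N
    rw [← map_pow]
    congr 1
    have : c ^ Fintype.card Fh ^ N = c := FiniteField.pow_card_pow N c
    rwa [hcardh] at this
  have hFq : ∀ (c : Fq) (N : ℕ), (algebraMap Fq F c) ^ (h ^ n) ^ N = algebraMap Fq F c := by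
    intro c N
    rw [← map_pow]
    congr 1
    have : c ^ Fintype.card Fq ^ N = c := FiniteField.pow_card_pow N c
    rwa [hcardq] at this
  have hmem : ∀ f : Fin k → F, f ∈ Sol ↔ ∀ r : ℕ, coeffFn Q0 r + keyE h n K Q f r = 0 := by
    intro f
    rw [hSol]
    exact Iff.rfl
  have h0 : ∀ r, keyE h n K Q (0 : Fin k → F) r = 0 := by
    intro r
    have := keyE_sub h n K Q hsub (0 : Fin k → F) 0 r
    rw [sub_zero, sub_self] at this
    exact this.symm
  have hnegE : ∀ (g : Fin k → F) (r : ℕ), keyE h n K Q (-g) r = - keyE h n K Q g r := by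
    intro g r
    have := keyE_sub h n K Q hsub 0 g r
    rw [h0, zero_sub, zero_sub] at this
    exact this.symm
  have haddE : ∀ (f g : Fin k → F) (r : ℕ),
      keyE h n K Q (f + g) r = keyE h n K Q f r + keyE h n K Q g r := by
    intro f g r
    have := keyE_sub h n K Q hsub f (-g) r
    rw [hnegE, sub_neg_eq_add, sub_neg_eq_add] at this
    exact this.symm
  constructor
  · -- Part 1: empty or a coset
    by_cases hemp : Sol = ∅
    · exact Or.inl hemp
    · obtain ⟨v, hv⟩ := Set.nonempty_iff_ne_empty.mpr hemp
      set U : Submodule Fh (Fin k → F) :=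
        { carrier := {g | ∀ r, keyE h n K Q g r = 0}
          add_mem' := fun {x y} hx hy r => by rw [haddE, hx r, hy r, add_zero]
          zero_mem' := h0
          smul_mem' := fun c g hg r => by
            have hfg : (c • g) = (fun i => algebraMap Fh F c * g i) := by
              funext i
              rw [Pi.smul_apply, Algebra.smul_def]
            rw [hfg, keyE_smul h n K Q _ (hFh c) g r, hg r, mul_zero] } with hUdef
      have hU : ∀ g : Fin k → F, g ∈ U ↔ ∀ r, keyE h n K Q g r = 0 := fun g => Iff.rfl
      refine Or.inr ⟨v, U, ?_⟩
      have hv' := (hmem v).mp hv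
      ext f
      simp only [Set.mem_setOf_eq]
      rw [hmem f, hU]
      constructor
      · intro hf r
        have hsv := keyE_sub h n K Q hsub f v r
        have h1 := hf r
        have h2 := hv' r
        linear_combination -hsv + h1 - h2
      · intro hf r
        have hsv := keyE_sub h n K Q hsub f v r
        have h2 := hv' r
        have h3 := hf r
        linear_combination h2 + hsv + h3
  · -- Part 2: the periodic structure
    by_cases hall : ∀ (j : Fin s) (i : ℕ), coeffFn (Q j) i = 0
    · -- all Q_j vanish, so Sol = ∅ since Q0 ≠ 0
      have hQ0 : coeffFn Q0 ≠ 0 := by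
        intro hz
        exact hQ ⟨hz, fun j => funext fun i => hall j i⟩
      obtain ⟨r0, hr0⟩ : ∃ r0, coeffFn Q0 r0 ≠ 0 := by
        by_contra hc
        push_neg at hc
        exact hQ0 (funext hc)
      have hempty : Sol = ∅ := by
        ext f
        simp only [Set.mem_empty_iff_false, iff_false]
        intro hf
        have hE : keyE h n K Q f r0 = 0 := by
          unfold keyE skewMul
          exact Finset.sum_eq_zero fun j _ => Finset.sum_eq_zero fun i _ => by
            rw [hall j i, zero_mul]
        have := (hmem f).mp hf r0
        rw [hE, add_zero] at this
        exact hr0 this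
      refine ⟨⊥, by simp, ?_⟩
      intro r f hf
      rw [hempty] at hf
      exact absurd hf (Set.notMem_empty f)
    · push_neg at hall
      have hex : ∃ i : ℕ, ∃ j : Fin s, coeffFn (Q j) i ≠ 0 := by
        obtain ⟨j, i, hji⟩ := hall
        exact ⟨i, j, hji⟩
      set istar := Nat.find hex with histar
      obtain ⟨j0, hj0⟩ := Nat.find_spec hex
      have hmin : ∀ i < istar, ∀ j : Fin s, coeffFn (Q j) i = 0 := by
        intro i hi j
        by_contra hc
        exact Nat.find_min hex hi ⟨j, hc⟩
      set c : Fin s → F := fun j => coeffFn (Q j) istar with hcdef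
      have hh0 : h ≠ 0 := by omega
      -- properties of keyL
      have hLadd : ∀ x y : F, keyL h n istar c (x + y) = keyL h n istar c x + keyL h n istar c y := by
        intro x y
        unfold keyL
        rw [← Finset.sum_add_distrib]
        refine Finset.sum_congr rfl fun j _ => ?_
        have h1 : (x + y) ^ (h ^ n) ^ (j : ℕ) = x ^ (h ^ n) ^ (j : ℕ) + y ^ (h ^ n) ^ (j : ℕ) := by
          have := haddF (n * (j : ℕ)) x y
          rwa [pow_mul] at this
        rw [h1, haddF istar, mul_add]
      have hLsmul : ∀ (d : Fq) (x : F), keyL h n istar c (algebraMap Fq F d * x)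
          = (algebraMap Fq F d) ^ h ^ istar * keyL h n istar c x := by
        intro d x
        unfold keyL
        rw [Finset.mul_sum]
        refine Finset.sum_congr rfl fun j _ => ?_
        rw [mul_pow, hFq d (j : ℕ), mul_pow]
        ring
      have hLzero : keyL h n istar c (0 : F) = 0 := by
        unfold keyL
        refine Finset.sum_eq_zero fun j _ => ?_
        rw [zero_pow (pow_ne_zero _ (pow_ne_zero _ hh0)), zero_pow (pow_ne_zero _ hh0), mul_zero]
      set W : Submodule Fq F :=
        { carrier := {x | keyL h n istar c x = 0}
          add_mem' := fun {x y} hx hy => by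
            have hx' : keyL h n istar c x = 0 := hx
            have hy' : keyL h n istar c y = 0 := hy
            show keyL h n istar c (x + y) = 0
            rw [hLadd, hx', hy', add_zero]
          zero_mem' := hLzero
          smul_mem' := fun d x hx => by
            have hx' : keyL h n istar c x = 0 := hx
            show keyL h n istar c (d • x) = 0
            rw [Algebra.smul_def, hLsmul, hx', mul_zero] } with hWdef
      have hW : ∀ x : F, x ∈ W ↔ keyL h n istar c x = 0 := fun x => Iff.rfl
      -- the associated polynomial
      set P : Polynomial F :=
        ∑ j : Fin s, Polynomial.C (c j) * Polynomial.X ^ ((h ^ n) ^ (j : ℕ)) with hPdef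
      have hPne : P ≠ 0 := by
        intro hP
        have hcoeff : P.coeff ((h ^ n) ^ (j0 : ℕ)) = c j0 := by
          rw [hPdef, Polynomial.finset_sum_coeff]
          rw [Finset.sum_eq_single j0]
          · rw [Polynomial.coeff_C_mul, Polynomial.coeff_X_pow, if_pos rfl, mul_one]
          · intro j _ hj
            rw [Polynomial.coeff_C_mul, Polynomial.coeff_X_pow, if_neg, mul_zero]
            intro heq
            exact hj (Fin.ext (Nat.pow_right_injective hq2 heq.symm))
          · intro hj
            exact absurd (Finset.mem_univ j0) hj
        rw [hP, Polynomial.coeff_zero] at hcoeff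
        exact hj0 hcoeff.symm
      have hPdeg : P.natDegree ≤ (h ^ n) ^ (s - 1) := by
        rw [hPdef]
        refine Polynomial.natDegree_sum_le_of_forall_le _ _ fun j _ => ?_
        refine le_trans (Polynomial.natDegree_C_mul_le _ _) ?_
        rw [Polynomial.natDegree_X_pow]
        exact Nat.pow_le_pow_right (by omega) (by omega)
      -- injectivity of the Frobenius power
      have hinj : Function.Injective (fun x : F => x ^ h ^ istar) := by
        intro x y hxy
        simp only at hxy
        have hz : (x - y) ^ h ^ istar = 0 := by
          rw [hsub istar, hxy, sub_self]
        have := pow_eq_zero_iff (pow_ne_zero _ hh0) |>.mp hz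
        exact sub_eq_zero.mp this
      have hmaps : ∀ x ∈ (W : Set F), (x ^ h ^ istar) ∈ (P.roots.toFinset : Set F) := by
        intro x hx
        have hx' : keyL h n istar c x = 0 := hx
        simp only [Finset.coe_sort_coe, Finset.mem_coe, Multiset.mem_toFinset]
        rw [Polynomial.mem_roots hPne]
        show P.eval (x ^ h ^ istar) = 0
        rw [hPdef]
        rw [Polynomial.eval_finset_sum]
        rw [← hx']
        unfold keyL
        refine Finset.sum_congr rfl fun j _ => ?_
        rw [Polynomial.eval_mul, Polynomial.eval_C, Polynomial.eval_pow, Polynomial.eval_X]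
        rw [pow_right_comm]
      -- cardinality bound
      have hcard : Nat.card W ≤ (h ^ n) ^ (s - 1) := by
        have e1 : Nat.card W = Set.ncard (W : Set F) := Nat.card_coe_set_eq _
        have e2 : Set.ncard (W : Set F)
            = Set.ncard ((fun x : F => x ^ h ^ istar) '' (W : Set F)) :=
          (Set.ncard_image_of_injective _ hinj).symm
        have e3 : Set.ncard ((fun x : F => x ^ h ^ istar) '' (W : Set F))
            ≤ Set.ncard (P.roots.toFinset : Set F) := by
          refine Set.ncard_le_ncard ?_ (P.roots.toFinset.finite_toSet)
          rintro y ⟨x, hx, rfl⟩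
          exact hmaps x hx
        have e4 : Set.ncard (P.roots.toFinset : Set F) = P.roots.toFinset.card :=
          Set.ncard_coe_finset _
        have e5 : P.roots.toFinset.card ≤ Multiset.card P.roots :=
          Multiset.toFinset_card_le _
        have e6 : Multiset.card P.roots ≤ P.natDegree := P.card_roots'
        rw [e1, e2]
        refine le_trans e3 ?_
        rw [e4]
        exact le_trans e5 (le_trans e6 hPdeg)
      have hfin : Module.finrank Fq W ≤ s - 1 := by
        letI : Fintype W := Fintype.ofFinite W
        have hfr : Fintype.card W = Fintype.card Fq ^ Module.finrank Fq W :=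
          Module.card_eq_pow_finrank
        have hq1 : 1 < Fintype.card Fq := by rw [hcardq]; omega
        have hle : Fintype.card Fq ^ Module.finrank Fq W ≤ Fintype.card Fq ^ (s - 1) := by
          rw [← hfr, ← Nat.card_eq_fintype_card, hcardq]
          exact hcard
        exact (Nat.pow_le_pow_iff_right hq1).mp hle
      refine ⟨W, hfin, ?_⟩
      intro r f hf f' hf' hpre
      rw [hW]
      have h1 := (hmem f).mp hf ((r : ℕ) + istar)
      have h2 := (hmem f').mp hf' ((r : ℕ) + istar)
      have hEE : keyE h n K Q f ((r : ℕ) + istar) - keyE h n K Q f' ((r : ℕ) + istar)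
          = ∑ j : Fin s, c j *
              ((f r ^ (h ^ n) ^ (j : ℕ)) ^ h ^ istar - (f' r ^ (h ^ n) ^ (j : ℕ)) ^ h ^ istar) := by
        unfold keyE skewMul
        rw [← Finset.sum_sub_distrib]
        refine Finset.sum_congr rfl fun j _ => ?_
        rw [← Finset.sum_sub_distrib]
        rw [Finset.sum_eq_single istar]
        · have hr1 : (r : ℕ) + istar - istar = (r : ℕ) := by omega
          have hcf : ∀ g : Fin k → F,
              coeffFn (fun t => g t ^ (h ^ n) ^ (j : ℕ)) ((r : ℕ)) = g r ^ (h ^ n) ^ (j : ℕ) := by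
            intro g
            unfold coeffFn
            rw [dif_pos r.isLt]
          rw [hr1, hcf, hcf, mul_sub]
        · intro i hi hne
          rcases lt_or_gt_of_ne hne with hlt | hgt
          · rw [hmin i hlt j, zero_mul, zero_mul, sub_self]
          · have hile : i ≤ (r : ℕ) + istar := by
              rw [Finset.mem_range] at hi
              omega
            have hidx : (r : ℕ) + istar - i < (r : ℕ) := by omega
            have heqc : coeffFn (fun t => f t ^ (h ^ n) ^ (j : ℕ)) ((r : ℕ) + istar - i)
                = coeffFn (fun t => f' t ^ (h ^ n) ^ (j : ℕ)) ((r : ℕ) + istar - i) := by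
              unfold coeffFn
              by_cases hlt2 : (r : ℕ) + istar - i < k
              · rw [dif_pos hlt2, dif_pos hlt2]
                show f ⟨(r : ℕ) + istar - i, hlt2⟩ ^ (h ^ n) ^ (j : ℕ)
                    = f' ⟨(r : ℕ) + istar - i, hlt2⟩ ^ (h ^ n) ^ (j : ℕ)
                rw [hpre ⟨(r : ℕ) + istar - i, hlt2⟩ hidx]
              · rw [dif_neg hlt2, dif_neg hlt2]
            rw [heqc, sub_self]
        · intro habs
          exact absurd (Finset.mem_range.mpr (by omega)) habs
      have h4 : keyL h n istar c (f r - f' r) = ∑ j : Fin s, c j *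
          ((f r ^ (h ^ n) ^ (j : ℕ)) ^ h ^ istar - (f' r ^ (h ^ n) ^ (j : ℕ)) ^ h ^ istar) := by
        unfold keyL
        refine Finset.sum_congr rfl fun j _ => ?_
        congr 1
        have hq : (f r - f' r) ^ (h ^ n) ^ (j : ℕ)
            = f r ^ (h ^ n) ^ (j : ℕ) - f' r ^ (h ^ n) ^ (j : ℕ) := by
          have := hsub (n * (j : ℕ)) (f r) (f' r)
          rwa [pow_mul] at this
        rw [hq, hsub istar]
      rw [h4, ← hEE]
      linear_combination h1 - h2
end
end

section
/- Let 1 ≤ s ≤ λ and 1 ≤ k ≤ n(λ−s+1), and set D := ⌊(n(λ−s+1)−k+1)/(s+1)⌋. Let y = (y_1|…|y_ℓ) with y_i ∈ F^{λ×η} be arbitrary, and let a_1,…,a_ℓ ∈ F and γ ∈ F be arbitrary. Then there exist coefficient vectors Q_0 ∈ F^{D+k} and Q_1,…,Q_s ∈ F^{D+1}, not all zero, such that Q_0(γ^{vλ+j})_{a_i} + Σ_{r=1}^{s} Q_r(y_{i, vλ+j+r−1})_{a_i} = 0 for all 1 ≤ i ≤ ℓ, 0 ≤ v ≤ η−1,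 and 0 ≤ j ≤ λ−s. -/
noncomputable section

open Finset

variable {F : Type*} [Field F]

/-- Interpolation step for folded linearized Reed–Solomon
codes: existence of a nonzero interpolation skew polynomial satisfying all
folded interpolation constraints of the received word `y`. -/
theorem flrs_interpolation_exists
    {F : Type*} [Field F] [Fintype F]
    (q m lam eta ell : ℕ) (hq : IsPrimePow q)
    (hm : 1 ≤ m) (hlam : 1 ≤ lam) (heta : 1 ≤ eta) (hell : 1 ≤ ell)
    (hcard : Fintype.card F = q ^ m)
    (s k : ℕ) (hs1 : 1 ≤ s) (hsl : s ≤ lam)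
    (hk1 : 1 ≤ k) (hk2 : k ≤ eta * ell * (lam - s + 1))
    (y : Fin ell → Matrix (Fin lam) (Fin eta) F)
    (a : Fin ell → F) (γ : F) :
    ∃ (Q0 : Fin ((eta * ell * (lam - s + 1) - k + 1) / (s + 1) + k) → F)
      (Q : Fin s → Fin ((eta * ell * (lam - s + 1) - k + 1) / (s + 1) + 1) → F),
      ¬(Q0 = 0 ∧ Q = 0) ∧
      ∀ (i : Fin ell) (v : Fin eta) (j : ℕ), j ≤ lam - s →
        opEval q Q0 (a i) (γ ^ ((v : ℕ) * lam + j)) +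
          ∑ r : Fin s,
            opEval q (Q r) (a i) (matEnt (y i) ((v : ℕ) * lam + j + (r : ℕ))) = 0 := by
  classical
  have hFone : 1 < Fintype.card F := Fintype.one_lt_card
  set T := lam - s + 1 with hT
  set N := eta * ell * T with hN
  set D := (N - k + 1) / (s + 1) with hD
  -- the evaluation map
  set φ : ((Fin (D + k) → F) × (Fin s → Fin (D + 1) → F)) → (Fin ell × Fin eta × Fin T → F) :=
    fun Qp p => opEval q Qp.1 (a p.1) (γ ^ ((p.2.1 : ℕ) * lam + (p.2.2 : ℕ))) +
      ∑ r : Fin s, opEval q (Qp.2 r) (a p.1)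
        (matEnt (y p.1) ((p.2.1 : ℕ) * lam + (p.2.2 : ℕ) + (r : ℕ))) with hφ
  have hopsub : ∀ (kk : ℕ) (f g : Fin kk → F) (aa b : F),
      opEval q (f - g) aa b = opEval q f aa b - opEval q g aa b := by
    intro kk f g aa b
    simp [opEval, sub_mul, Finset.sum_sub_distrib]
  have hsub : ∀ x y', φ (x - y') = φ x - φ y' := by
    intro x y'
    funext p
    simp only [hφ, Prod.fst_sub, Prod.snd_sub, Pi.sub_apply, hopsub,
      Finset.sum_sub_distrib]
    ring
  have hcard2 : Fintype.card (Fin ell × Fin eta × Fin T → F) <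
      Fintype.card ((Fin (D + k) → F) × (Fin s → Fin (D + 1) → F)) := by
    rw [Fintype.card_prod, Fintype.card_fun, Fintype.card_fun, Fintype.card_fun,
      Fintype.card_fun]
    simp only [Fintype.card_prod, Fintype.card_fin, ← pow_mul, ← pow_add]
    apply Nat.pow_lt_pow_right hFone
    have hdm := Nat.div_add_mod (N - k + 1) (s + 1)
    rw [← hD] at hdm
    have hml : (N - k + 1) % (s + 1) < s + 1 := Nat.mod_lt _ (by omega)
    have h1 : ell * (eta * T) = N := by rw [hN]; ring
    have h3 : D + k + (D + 1) * s = (s + 1) * D + (k + s) := by ring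
    rw [h3, h1]
    omega
  obtain ⟨x, y', hxy, hfeq⟩ := Fintype.exists_ne_map_eq_of_card_lt φ hcard2
  set z := x - y' with hz
  have hz0 : z ≠ 0 := sub_ne_zero.mpr hxy
  have hφz : φ z = 0 := by rw [hz, hsub, hfeq, sub_self]
  refine ⟨z.1, z.2, ?_, ?_⟩
  · rintro ⟨h1, h2⟩
    exact hz0 (Prod.ext h1 h2)
  · intro i v j hj
    have hjT : j < T := by omega
    have := congrFun hφz (i, v, ⟨j, hjT⟩)
    simpa [hφ] using this
end
end

section
/- Let 1 ≤ s ≤ m, let γ be a primitive element of F = 𝔽_{q^m}, let k ≥ 1, and let Q_0, Q_1,…,Q_s be coefficient vectors over F, not all zero. Let Sol := { f ∈ F^k : Q_0 + Σ_{j=1}^{s} Q_j·f·γ^{j−1} = 0 }, where · denotes the skew product. Then Sol is either empty or a coset of an 𝔽_q-linear subspace of F^k, and there exists a set B ⊆ {0,…,k−1} with |B| ≤ ⌈k/m⌉·(s−1) such that any two elements of Sol agreeing on all coordinates in B are equal. In particular, |Sol| ≤ q^{m·⌈k/m⌉·(s−1)}. -/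
noncomputable section

open Finset

variable {F : Type*} [Field F]

namespace FlrsAux

lemma coeffFn_fin {k : ℕ} (g : Fin k → F) (d : Fin k) :
    coeffFn g (d : ℕ) = g d := by
  simp [coeffFn, d.isLt]

lemma coeffFn_mul_right {k : ℕ} (g : Fin k → F) (c : F) (q n : ℕ) :
    coeffFn (fun i : Fin k => g i * c ^ q ^ (i : ℕ)) n = coeffFn g n * c ^ q ^ n := by
  unfold coeffFn
  split <;> simp

def EE (q : ℕ) {F : Type*} [Field F] {s k : ℕ} {K : Fin s → ℕ}
    (Q : ∀ j : Fin s, Fin (K j) → F) (γ : F) (g : Fin k → F) (r : ℕ) : F :=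
  ∑ j : Fin s, skewMul q (coeffFn (Q j))
      (coeffFn fun i : Fin k => g i * (γ ^ (j : ℕ)) ^ q ^ (i : ℕ)) r

def PP {F : Type*} [Field F] {s : ℕ} {K : Fin s → ℕ} (Q : ∀ j : Fin s, Fin (K j) → F)
    (i : ℕ) : Polynomial F :=
  ∑ j : Fin s, Polynomial.C (coeffFn (Q j) i) * Polynomial.X ^ (j : ℕ)

lemma EE_formula (q : ℕ) {s k : ℕ} {K : Fin s → ℕ}
    (Q : ∀ j : Fin s, Fin (K j) → F) (γ : F) (g : Fin k → F) (r : ℕ) :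
    EE q Q γ g r = ∑ i ∈ Finset.range (r + 1),
      (coeffFn g (r - i)) ^ q ^ i * Polynomial.eval (γ ^ q ^ r) (PP Q i) := by
  unfold EE skewMul
  rw [Finset.sum_comm]
  refine Finset.sum_congr rfl fun i hi => ?_
  have hir : i ≤ r := Nat.lt_succ_iff.mp (Finset.mem_range.mp hi)
  simp only [PP, Polynomial.eval_finset_sum, Polynomial.eval_mul, Polynomial.eval_C,
    Polynomial.eval_pow, Polynomial.eval_X]
  rw [Finset.mul_sum]
  refine Finset.sum_congr rfl fun j _ => ?_
  rw [coeffFn_mul_right, mul_pow]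
  have h1 : ((γ ^ (j : ℕ)) ^ q ^ (r - i)) ^ q ^ i = (γ ^ q ^ r) ^ (j : ℕ) := by
    rw [← pow_mul, ← pow_add, Nat.sub_add_cancel hir, ← pow_mul, mul_comm, pow_mul]
  rw [h1]
  ring

lemma PP_coeff {s : ℕ} {K : Fin s → ℕ} (Q : ∀ j : Fin s, Fin (K j) → F)
    (i : ℕ) (j : Fin s) : (PP Q i).coeff (j : ℕ) = coeffFn (Q j) i := by
  unfold PP
  rw [Polynomial.finset_sum_coeff, Finset.sum_eq_single j]
  · rw [Polynomial.coeff_C_mul, Polynomial.coeff_X_pow, if_pos rfl, mul_one]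
  · intro j' _ hne
    rw [Polynomial.coeff_C_mul, Polynomial.coeff_X_pow,
      if_neg (fun h => hne (Fin.val_injective h.symm)), mul_zero]
  · intro h; exact absurd (Finset.mem_univ j) h

lemma PP_natDegree {s : ℕ} {K : Fin s → ℕ} (Q : ∀ j : Fin s, Fin (K j) → F) (i : ℕ) :
    (PP Q i).natDegree ≤ s - 1 := by
  unfold PP
  refine Polynomial.natDegree_sum_le_of_forall_le _ _ fun j _ => ?_
  refine le_trans (Polynomial.natDegree_C_mul_X_pow_le _ _) ?_
  have := j.isLt
  omega

lemma exists_char (q m : ℕ) (hq : IsPrimePow q) {F : Type*} [Field F] [Fintype F]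
    (hcardF : Fintype.card F = q ^ m) :
    ∃ p t : ℕ, p.Prime ∧ 0 < t ∧ q = p ^ t ∧ CharP F p := by
  obtain ⟨p0, t0, hp0, ht0, hq_eq⟩ := hq
  have hp0' : Nat.Prime p0 := Nat.prime_iff.mpr hp0
  haveI : CharP F (ringChar F) := ringChar.charP F
  have hpprime : (ringChar F).Prime := CharP.char_is_prime F (ringChar F)
  obtain ⟨n, -, hcard⟩ := FiniteField.card F (ringChar F)
  have heq : p0 ^ (t0 * m) = ringChar F ^ (n : ℕ) := by
    rw [pow_mul, hq_eq, ← hcardF, hcard]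
  have hdvd : ringChar F ∣ p0 ^ (t0 * m) := by
    rw [heq]; exact dvd_pow_self _ n.pos.ne'
  have hpe : ringChar F = p0 :=
    (Nat.prime_dvd_prime_iff_eq hpprime hp0').mp (hpprime.dvd_of_dvd_pow hdvd)
  exact ⟨ringChar F, t0, hpprime, ht0, by rw [hpe, hq_eq], inferInstance⟩

lemma pow_q_pow_mod {F : Type*} [Field F] [Fintype F] (q m : ℕ) (hm : 1 ≤ m)
    (hcardF : Fintype.card F = q ^ m) (γ : F) (r : ℕ) :
    γ ^ q ^ r = γ ^ q ^ (r % m) := by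
  induction r using Nat.strong_induction_on with
  | _ r ih =>
    rcases lt_or_ge r m with h | h
    · rw [Nat.mod_eq_of_lt h]
    · have h1 : γ ^ q ^ r = (γ ^ q ^ (r - m)) ^ q ^ m := by
        rw [← pow_mul, ← pow_add, Nat.sub_add_cancel h]
      have h2 : (γ ^ q ^ (r - m)) ^ q ^ m = γ ^ q ^ (r - m) := by
        rw [← hcardF]; exact FiniteField.pow_card _
      have h3 : (r - m) % m = r % m := by
        conv_rhs => rw [← Nat.sub_add_cancel h]
        rw [Nat.add_mod_right]
      rw [h1, h2, ih (r - m) (by omega), h3]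

lemma gamma_inj {F : Type*} [Field F] [Fintype F] (q m : ℕ) (hq2 : 2 ≤ q)
    (hcardF : Fintype.card F = q ^ m) (γ : F) (hprim : IsPrimitive γ) :
    ∀ t ∈ Finset.range m, ∀ u ∈ Finset.range m, γ ^ q ^ t = γ ^ q ^ u → t = u := by
  have key : ∀ t u : ℕ, t < u → u < m → γ ^ q ^ t = γ ^ q ^ u → False := by
    intro t u htu hum heq
    classical
    have hm2 : 2 ≤ m := by omega
    have hγ0 : γ ≠ 0 := by
      intro h0
      have hcard3 : 3 ≤ Fintype.card F := by
        rw [hcardF]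
        calc 3 ≤ 2 ^ 2 := by omega
          _ ≤ q ^ 2 := Nat.pow_le_pow_left hq2 2
          _ ≤ q ^ m := Nat.pow_le_pow_right (by omega) hm2
      have hx : ∃ x : F, x ≠ 0 ∧ x ≠ 1 := by
        by_contra hc
        push_neg at hc
        have hsub : (Finset.univ : Finset F) ⊆ {0, 1} := by
          intro x _
          rcases eq_or_ne x 0 with h | h
          · simp [h]
          · simp [hc x h]
        have h2 := Finset.card_le_card hsub
        have h3 : ({0, 1} : Finset F).card ≤ 2 :=
          le_trans (Finset.card_insert_le _ _) (by simp)
        rw [Finset.card_univ] at h2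
        omega
      obtain ⟨x, hx0, hx1⟩ := hx
      obtain ⟨i, hi⟩ := hprim x hx0
      rcases Nat.eq_zero_or_pos i with h | h
      · rw [h, pow_zero] at hi; exact hx1 hi.symm
      · rw [h0, zero_pow (by omega)] at hi; exact hx0 hi.symm
    have h1le : 1 ≤ q ^ m := Nat.one_le_pow _ _ (by omega)
    have hpowcard : γ ^ q ^ m = γ := by rw [← hcardF]; exact FiniteField.pow_card γ
    have hγ1 : γ ^ (q ^ m - 1) = 1 := by
      have h2 : γ ^ (q ^ m - 1) * γ = 1 * γ := by
        rw [one_mul, ← pow_succ, Nat.sub_add_cancel h1le, hpowcard]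
      exact mul_right_cancel₀ hγ0 h2
    have hqm2 : 2 ≤ q ^ m := le_trans hq2 (Nat.le_self_pow (by omega) q)
    have hfin : IsOfFinOrder γ := isOfFinOrder_iff_pow_eq_one.mpr ⟨q ^ m - 1, by omega, hγ1⟩
    have hordge : q ^ m - 1 ≤ orderOf γ := by
      classical
      have hsub : Finset.univ.erase (0 : F) ⊆
          (Finset.range (orderOf γ)).image (γ ^ ·) := by
        intro x hx
        have hx0 : x ≠ 0 := (Finset.mem_erase.mp hx).1
        obtain ⟨i, hi⟩ := hprim x hx0
        refine Finset.mem_image.mpr ⟨i % orderOf γ,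
          Finset.mem_range.mpr (Nat.mod_lt _ hfin.orderOf_pos), ?_⟩
        rw [pow_mod_orderOf]; exact hi
      have h1 := Finset.card_le_card hsub
      have h2 : ((Finset.range (orderOf γ)).image (γ ^ ·)).card ≤ orderOf γ :=
        le_trans Finset.card_image_le (by rw [Finset.card_range])
      rw [Finset.card_erase_of_mem (Finset.mem_univ 0), Finset.card_univ, hcardF] at h1
      omega
    have hlt : q ^ t < q ^ u := Nat.pow_lt_pow_right (by omega) htu
    have hone : γ ^ (q ^ u - q ^ t) = 1 := by
      have h2 : γ ^ q ^ t * γ ^ (q ^ u - q ^ t) = γ ^ q ^ t * 1 := by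
        rw [mul_one, ← pow_add, Nat.add_sub_cancel' hlt.le, heq]
      exact mul_left_cancel₀ (pow_ne_zero _ hγ0) h2
    have hle := Nat.le_of_dvd (by omega) (orderOf_dvd_of_pow_eq_one hone)
    have hqum : q ^ u < q ^ m := Nat.pow_lt_pow_right (by omega) hum
    have h1t : 1 ≤ q ^ t := Nat.one_le_pow _ _ (by omega)
    omega
  intro t ht u hu heq
  rw [Finset.mem_range] at ht hu
  rcases Nat.lt_trichotomy t u with h | h | h
  · exact absurd heq fun he => key t u h hu he
  · exact h
  · exact absurd heq.symm fun he => key u t h ht he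

end FlrsAux

/-- Structure of the solution space of the FLRS key equation:
it is empty or a coset of an `𝔽_q`-subspace of `F^k`, and it is determined by
at most `⌈k/m⌉(s−1)` coordinates; in particular it has at most
`q^{m⌈k/m⌉(s−1)}` elements. -/
theorem flrs_solution_space_structure
    {Fq F : Type*} [Field Fq] [Field F] [Algebra Fq F] [Fintype Fq] [Fintype F]
    (q m : ℕ) (hq : IsPrimePow q) (hm : 1 ≤ m)
    (hcardq : Fintype.card Fq = q) (hcardF : Fintype.card F = q ^ m)
    (s : ℕ) (hs1 : 1 ≤ s) (hsm : s ≤ m)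
    (γ : F) (hprim : IsPrimitive γ) (k : ℕ) (hk : 1 ≤ k)
    (K0 : ℕ) (Q0 : Fin K0 → F) (K : Fin s → ℕ) (Q : ∀ j : Fin s, Fin (K j) → F)
    (hQ : ¬(coeffFn Q0 = 0 ∧ ∀ j, coeffFn (Q j) = 0))
    (Sol : Set (Fin k → F))
    (hSol : Sol = {f | ∀ r : ℕ, coeffFn Q0 r +
        ∑ j : Fin s,
          skewMul q (coeffFn (Q j))
            (coeffFn fun i : Fin k => f i * (γ ^ (j : ℕ)) ^ q ^ (i : ℕ)) r = 0}) :
    (Sol = ∅ ∨ ∃ (v : Fin k → F) (U : Submodule Fq (Fin k → F)),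
        Sol = {f | f - v ∈ U}) ∧
    (∃ B : Finset (Fin k), B.card ≤ (k + m - 1) / m * (s - 1) ∧
      ∀ f ∈ Sol, ∀ f' ∈ Sol, (∀ i ∈ B, f i = f' i) → f = f') ∧
    Sol.ncard ≤ q ^ (m * ((k + m - 1) / m * (s - 1))) := by
  classical
  obtain ⟨p, t, hp_prime, ht_pos, hq_eq, hcharF⟩ := FlrsAux.exists_char q m hq hcardF
  haveI := hcharF
  haveI : Fact p.Prime := ⟨hp_prime⟩
  have hq2 : 2 ≤ q := by
    rw [hq_eq]
    calc 2 ≤ p := hp_prime.two_le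
      _ ≤ p ^ t := Nat.le_self_pow (by omega) p
  have hqpow : ∀ i : ℕ, q ^ i = p ^ (t * i) := by
    intro i; rw [hq_eq, ← pow_mul]
  have hsubpow : ∀ (x y : F) (i : ℕ), (x - y) ^ q ^ i = x ^ q ^ i - y ^ q ^ i := by
    intro x y i; rw [hqpow]; exact sub_pow_char_pow x y (t * i)
  have haddpow : ∀ (x y : F) (i : ℕ), (x + y) ^ q ^ i = x ^ q ^ i + y ^ q ^ i := by
    intro x y i; rw [hqpow]; exact add_pow_char_pow x y p (t * i)
  have halg : ∀ (c : Fq) (i : ℕ), (algebraMap Fq F c) ^ q ^ i = algebraMap Fq F c := by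
    intro c i
    rw [← map_pow]
    congr 1
    rw [← hcardq]
    exact FiniteField.pow_card_pow i c
  set E : (Fin k → F) → ℕ → F := fun g => FlrsAux.EE q Q γ g with hE_def
  have hSol' : ∀ f, f ∈ Sol ↔ ∀ r : ℕ, coeffFn Q0 r + E f r = 0 := by
    intro f; rw [hSol]; exact Iff.rfl
  have hEform : ∀ (g : Fin k → F) (r : ℕ), E g r = ∑ i ∈ Finset.range (r + 1),
      (coeffFn g (r - i)) ^ q ^ i * Polynomial.eval (γ ^ q ^ r) (FlrsAux.PP Q i) :=
    fun g r => FlrsAux.EE_formula q Q γ g r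
  have hcsub : ∀ (a b : Fin k → F) (n : ℕ),
      coeffFn (a - b) n = coeffFn a n - coeffFn b n := by
    intro a b n; unfold coeffFn; split <;> simp
  have hcadd : ∀ (a b : Fin k → F) (n : ℕ),
      coeffFn (a + b) n = coeffFn a n + coeffFn b n := by
    intro a b n; unfold coeffFn; split <;> simp
  have hEsub : ∀ (a b : Fin k → F) (r : ℕ), E (a - b) r = E a r - E b r := by
    intro a b r
    rw [hEform, hEform, hEform, ← Finset.sum_sub_distrib]
    refine Finset.sum_congr rfl fun i _ => ?_
    rw [hcsub, hsubpow, sub_mul]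
  have hEadd : ∀ (a b : Fin k → F) (r : ℕ), E (a + b) r = E a r + E b r := by
    intro a b r
    rw [hEform, hEform, hEform, ← Finset.sum_add_distrib]
    refine Finset.sum_congr rfl fun i _ => ?_
    rw [hcadd, haddpow, add_mul]
  by_cases hne : Sol = ∅
  · refine ⟨Or.inl hne, ⟨∅, by simp, ?_⟩, ?_⟩
    · intro f hf
      rw [hne] at hf
      exact absurd hf (Set.notMem_empty f)
    · simp [hne]
  · obtain ⟨v, hv⟩ := Set.nonempty_iff_ne_empty.mpr hne
    have hvE := (hSol' v).mp hv
    have hQex : ∃ (i : ℕ) (j : Fin s), coeffFn (Q j) i ≠ 0 := by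
      by_contra hc
      push_neg at hc
      apply hQ
      constructor
      · funext r
        have h0 : E v r = 0 := by
          rw [hEform]
          refine Finset.sum_eq_zero fun i _ => ?_
          have hP0 : FlrsAux.PP Q i = 0 := by
            unfold FlrsAux.PP
            refine Finset.sum_eq_zero fun j _ => by rw [hc i j]; simp
          rw [hP0]
          simp
        have h1 := hvE r
        rw [h0, add_zero] at h1
        exact h1
      · intro j
        funext i
        exact hc i j
    obtain ⟨i0, j0, hi0⟩ := hQex
    have hPi0 : FlrsAux.PP Q i0 ≠ 0 := by
      intro h0
      have h1 := FlrsAux.PP_coeff Q i0 j0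
      rw [h0] at h1
      simp at h1
      exact hi0 h1.symm
    have hPbound : ∀ i, (∀ j : Fin s, K j ≤ i) → FlrsAux.PP Q i = 0 := by
      intro i hKi
      unfold FlrsAux.PP
      refine Finset.sum_eq_zero fun j _ => ?_
      have hc : coeffFn (Q j) i = 0 := by
        unfold coeffFn
        rw [dif_neg (Nat.not_lt.mpr (hKi j))]
      rw [hc]
      simp
    set N : ℕ := (Finset.univ.sup K) + 1 with hN
    have hNbound : ∀ i, N ≤ i → FlrsAux.PP Q i = 0 := by
      intro i hi
      apply hPbound
      intro j
      have := Finset.le_sup (f := K) (Finset.mem_univ j)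
      omega
    set T : Finset ℕ := (Finset.range N).filter (fun i => FlrsAux.PP Q i ≠ 0) with hT
    have hTne : T.Nonempty := by
      refine ⟨i0, Finset.mem_filter.mpr ⟨Finset.mem_range.mpr ?_, hPi0⟩⟩
      by_contra hc
      exact hPi0 (hNbound i0 (by omega))
    set istar := T.max' hTne with histar
    have hPstar : FlrsAux.PP Q istar ≠ 0 := (Finset.mem_filter.mp (T.max'_mem hTne)).2
    have hmaxP : ∀ i, istar < i → FlrsAux.PP Q i = 0 := by
      intro i hi
      by_contra hc
      have hiN : i < N := by
        by_contra h'
        exact hc (hNbound i (by omega))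
      have := Finset.le_max' T i (Finset.mem_filter.mpr ⟨Finset.mem_range.mpr hiN, hc⟩)
      omega
    set Bad : Finset ℕ := (Finset.range m).filter
      (fun tt => Polynomial.eval (γ ^ q ^ tt) (FlrsAux.PP Q istar) = 0) with hBadDef
    have hγinj := FlrsAux.gamma_inj q m hq2 hcardF γ hprim
    have hBadcard : Bad.card ≤ s - 1 := by
      have h1 : Bad.card ≤ (FlrsAux.PP Q istar).roots.toFinset.card := by
        apply Finset.card_le_card_of_injOn (fun tt => γ ^ q ^ tt)
        · intro tt htt
          rw [Finset.mem_coe, Multiset.mem_toFinset, Polynomial.mem_roots hPstar]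
          exact (Finset.mem_filter.mp htt).2
        · intro a ha b hb hab
          exact hγinj a (Finset.mem_filter.mp ha).1 b (Finset.mem_filter.mp hb).1 hab
      have h2 := Multiset.toFinset_card_le (FlrsAux.PP Q istar).roots
      have h3 := Polynomial.card_roots' (FlrsAux.PP Q istar)
      have h4 := FlrsAux.PP_natDegree Q istar
      omega
    set B : Finset (Fin k) := Finset.univ.filter
      (fun d : Fin k => (istar + (d : ℕ)) % m ∈ Bad) with hBDef
    have hBcard : B.card ≤ (k + m - 1) / m * (s - 1) := by
      have hsub : B.card ≤ (Bad ×ˢ Finset.range ((k + m - 1) / m)).card := by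
        apply Finset.card_le_card_of_injOn
          (fun d : Fin k => ((istar + (d : ℕ)) % m, (d : ℕ) / m))
        · intro d hd
          rw [Finset.mem_coe, Finset.mem_product]
          refine ⟨(Finset.mem_filter.mp hd).2, Finset.mem_range.mpr ?_⟩
          have hdk : (d : ℕ) < k := d.isLt
          have h1 : (k + m - 1) / m = (k - 1) / m + 1 := by
            have h' : k + m - 1 = (k - 1) + m := by omega
            rw [h', Nat.add_div_right _ (by omega)]
          have h2 : (d : ℕ) / m ≤ (k - 1) / m := Nat.div_le_div_right (by omega)
          show (d : ℕ) / m < (k + m - 1) / m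
          omega
        · intro a _ b _ hab
          simp only [Prod.mk.injEq] at hab
          obtain ⟨h1, h2⟩ := hab
          have hmod : (a : ℕ) % m = (b : ℕ) % m := Nat.ModEq.add_left_cancel' istar h1
          refine Fin.ext ?_
          have ha' := Nat.div_add_mod (a : ℕ) m
          have hb' := Nat.div_add_mod (b : ℕ) m
          rw [← ha', ← hb', hmod, h2]
      rw [Finset.card_product, Finset.card_range] at hsub
      calc B.card ≤ Bad.card * ((k + m - 1) / m) := hsub
        _ ≤ (s - 1) * ((k + m - 1) / m) := Nat.mul_le_mul_right _ hBadcard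
        _ = (k + m - 1) / m * (s - 1) := Nat.mul_comm _ _
    have hkey : ∀ g : Fin k → F, (∀ r, E g r = 0) → (∀ d ∈ B, g d = 0) → g = 0 := by
      intro g hEg hgB
      by_contra hgne
      have hex : ∃ d : Fin k, g d ≠ 0 := by
        by_contra hc
        push_neg at hc
        exact hgne (funext hc)
      have hSne : (Finset.univ.filter (fun d : Fin k => g d ≠ 0)).Nonempty := by
        obtain ⟨d0, hd0⟩ := hex
        exact ⟨d0, Finset.mem_filter.mpr ⟨Finset.mem_univ _, hd0⟩⟩
      set d := (Finset.univ.filter (fun d : Fin k => g d ≠ 0)).max' hSne with hd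
      have hgd : g d ≠ 0 :=
        (Finset.mem_filter.mp ((Finset.univ.filter (fun d : Fin k => g d ≠ 0)).max'_mem hSne)).2
      have hhigh : ∀ n : ℕ, (d : ℕ) < n → coeffFn g n = 0 := by
        intro n hn
        unfold coeffFn
        split
        case isTrue h =>
          by_contra hc
          have hle := Finset.le_max' (Finset.univ.filter (fun d : Fin k => g d ≠ 0))
            ⟨n, h⟩ (Finset.mem_filter.mpr ⟨Finset.mem_univ _, hc⟩)
          rw [← hd] at hle
          rw [Fin.le_def] at hle
          simp at hle
          omega
        case isFalse h => rfl
      have h0 := hEg (istar + (d : ℕ))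
      rw [hEform] at h0
      have hcol : ∑ i ∈ Finset.range (istar + (d : ℕ) + 1),
          (coeffFn g (istar + (d : ℕ) - i)) ^ q ^ i *
            Polynomial.eval (γ ^ q ^ (istar + (d : ℕ))) (FlrsAux.PP Q i) =
          (coeffFn g (istar + (d : ℕ) - istar)) ^ q ^ istar *
            Polynomial.eval (γ ^ q ^ (istar + (d : ℕ))) (FlrsAux.PP Q istar) := by
        refine Finset.sum_eq_single_of_mem istar (Finset.mem_range.mpr (by omega)) ?_
        intro i _ hine
        rcases Nat.lt_or_ge i istar with hlt | hge
        · rw [hhigh _ (by omega), zero_pow ((Nat.pow_pos (n := i) (by omega)).ne'), zero_mul]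
        · have hgt : istar < i := by omega
          rw [hmaxP i hgt]
          simp
      rw [hcol] at h0
      have hri : istar + (d : ℕ) - istar = (d : ℕ) := by omega
      rw [hri, FlrsAux.coeffFn_fin] at h0
      have heval : Polynomial.eval (γ ^ q ^ (istar + (d : ℕ))) (FlrsAux.PP Q istar) = 0 := by
        rcases mul_eq_zero.mp h0 with h | h
        · exact absurd (pow_eq_zero_iff ((Nat.pow_pos (n := istar) (by omega)).ne')
            |>.mp h) hgd
        · exact h
      rw [FlrsAux.pow_q_pow_mod q m hm hcardF γ (istar + (d : ℕ))] at heval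
      have hdB : d ∈ B := by
        rw [hBDef]
        refine Finset.mem_filter.mpr ⟨Finset.mem_univ _, ?_⟩
        rw [hBadDef]
        exact Finset.mem_filter.mpr
          ⟨Finset.mem_range.mpr (Nat.mod_lt _ (by omega)), heval⟩
      exact hgd (hgB d hdB)
    have hinj : ∀ f ∈ Sol, ∀ f' ∈ Sol, (∀ i ∈ B, f i = f' i) → f = f' := by
      intro f hf f' hf' hagree
      have hEg : ∀ r, E (f - f') r = 0 := by
        intro r
        rw [hEsub]
        have h1 := (hSol' f).mp hf r
        have h2 := (hSol' f').mp hf' r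
        linear_combination h1 - h2
      have hz : f - f' = 0 := hkey _ hEg (fun d hd => by
        rw [Pi.sub_apply, hagree d hd, sub_self])
      exact sub_eq_zero.mp hz
    have hcoset : ∃ (vv : Fin k → F) (U : Submodule Fq (Fin k → F)),
        Sol = {f | f - vv ∈ U} := by
      refine ⟨v, {
        carrier := {g | ∀ r, E g r = 0}
        add_mem' := by
          intro a b ha hb r
          rw [hEadd, ha r, hb r, add_zero]
        zero_mem' := by
          intro r
          rw [hEform]
          refine Finset.sum_eq_zero fun i _ => ?_
          have hc0 : coeffFn (0 : Fin k → F) (r - i) = 0 := by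
            unfold coeffFn; split <;> simp
          rw [hc0, zero_pow ((Nat.pow_pos (n := i) (by omega)).ne'), zero_mul]
        smul_mem' := by
          intro c a ha r
          have hsm : E (c • a) r = algebraMap Fq F c * E a r := by
            rw [hEform, hEform, Finset.mul_sum]
            refine Finset.sum_congr rfl fun i _ => ?_
            have h1 : coeffFn (c • a) (r - i) = algebraMap Fq F c * coeffFn a (r - i) := by
              unfold coeffFn
              split
              · simp [Algebra.smul_def]
              · simp
            rw [h1, mul_pow, halg]
            ring
          rw [hsm, ha r, mul_zero] }, ?_⟩
      ext f
      simp only [Set.mem_setOf_eq]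
      have hmem : (f - v ∈ ({g | ∀ r, E g r = 0} : Set (Fin k → F))) ↔
          ∀ r, E (f - v) r = 0 := Iff.rfl
      rw [show (f ∈ Sol) ↔ _ from hSol' f]
      constructor
      · intro hf r
        rw [hEsub]
        have h1 := hf r
        have h2 := hvE r
        show E f r - E v r = 0
        linear_combination h1 - h2
      · intro hU r
        have h1 : E (f - v) r = 0 := hU r
        rw [hEsub] at h1
        have h2 := hvE r
        linear_combination h1 + h2
    refine ⟨Or.inr hcoset, ⟨B, hBcard, hinj⟩, ?_⟩
    have hmap : Sol.ncard ≤ (Set.univ : Set (↥B → F)).ncard := by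
      apply Set.ncard_le_ncard_of_injOn (fun f (b : ↥B) => f b.1)
      · intro a _
        trivial
      · intro f hf f' hf' hff
        apply hinj f hf f' hf'
        intro i hi
        exact congrFun hff ⟨i, hi⟩
    rw [Set.ncard_univ, Nat.card_eq_fintype_card, Fintype.card_fun, Fintype.card_coe,
      hcardF] at hmap
    calc Sol.ncard ≤ (q ^ m) ^ B.card := hmap
      _ ≤ (q ^ m) ^ ((k + m - 1) / m * (s - 1)) :=
        Nat.pow_le_pow_right (Nat.one_le_pow _ _ (by omega)) hBcard
      _ = q ^ (m * ((k + m - 1) / m * (s - 1))) := by rw [← pow_mul]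
end
end

section
/- Let s ≥ 1, let γ be a primitive element of F = 𝔽_{q^m}, let k ≥ 1, and let Q_0, Q_1, …, Q_s be coefficient vectors over F. Write (Q_j)_0 for the constant (index-0) coefficient of Q_j and set R_0(x) := Σ_{j=1}^{s} (Q_j)_0·x^{j−1} ∈ F[x]. Let r ∈ {0,…,k−1} be such that R_0(γ^{q^r}) ≠ 0. If f, f′ ∈ F^k both satisfy Q_0 + Σ_{j=1}^{s} Q_j·f·γ^{j−1} = 0 and Q_0 + Σ_{j=1}^{s} Q_j·f′·γ^{j−1} = 0 (skew products), and f_i = f′_i for all i < r, then f_r = f′_r. -/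
noncomputable section

open Finset

variable {F : Type*} [Field F]

/-- If `R_0(γ^{q^r}) ≠ 0`, where
`R_0(x) = Σ_{j=1}^s (Q_j)_0 x^{j−1}`, then any two solutions of the FLRS key
equation agreeing on all coordinates below `r` also agree at coordinate `r`. -/
theorem flrs_coordinate_determined
    {F : Type*} [Field F] [Fintype F]
    (q m : ℕ) (hq : IsPrimePow q) (hm : 1 ≤ m)
    (hcard : Fintype.card F = q ^ m)
    (s : ℕ) (hs : 1 ≤ s)
    (γ : F) (hprim : IsPrimitive γ) (k : ℕ) (hk : 1 ≤ k)
    (K0 : ℕ) (Q0 : Fin K0 → F) (K : Fin s → ℕ) (Q : ∀ j : Fin s, Fin (K j) → F)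
    (r : Fin k)
    (hR : ∑ j : Fin s, coeffFn (Q j) 0 * (γ ^ q ^ (r : ℕ)) ^ (j : ℕ) ≠ 0)
    (f f' : Fin k → F)
    (hf : ∀ ρ : ℕ, coeffFn Q0 ρ +
        ∑ j : Fin s,
          skewMul q (coeffFn (Q j))
            (coeffFn fun i : Fin k => f i * (γ ^ (j : ℕ)) ^ q ^ (i : ℕ)) ρ = 0)
    (hf' : ∀ ρ : ℕ, coeffFn Q0 ρ +
        ∑ j : Fin s,
          skewMul q (coeffFn (Q j))
            (coeffFn fun i : Fin k => f' i * (γ ^ (j : ℕ)) ^ q ^ (i : ℕ)) ρ = 0)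
    (hagree : ∀ i : Fin k, (i : ℕ) < (r : ℕ) → f i = f' i) :
    f r = f' r := by
  have key : ∀ j : Fin s,
      skewMul q (coeffFn (Q j))
          (coeffFn fun i : Fin k => f i * (γ ^ (j : ℕ)) ^ q ^ (i : ℕ)) r
        - skewMul q (coeffFn (Q j))
          (coeffFn fun i : Fin k => f' i * (γ ^ (j : ℕ)) ^ q ^ (i : ℕ)) r
      = coeffFn (Q j) 0 * ((f r - f' r) * (γ ^ (j : ℕ)) ^ q ^ (r : ℕ)) := by
    intro j
    unfold skewMul
    rw [← Finset.sum_sub_distrib, Finset.sum_range_succ']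
    have h0 : ∀ i ∈ Finset.range (r : ℕ),
        coeffFn (Q j) (i + 1) *
            coeffFn (fun i : Fin k => f i * (γ ^ (j : ℕ)) ^ q ^ (i : ℕ)) ((r : ℕ) - (i + 1))
              ^ q ^ (i + 1)
          - coeffFn (Q j) (i + 1) *
            coeffFn (fun i : Fin k => f' i * (γ ^ (j : ℕ)) ^ q ^ (i : ℕ)) ((r : ℕ) - (i + 1))
              ^ q ^ (i + 1) = 0 := by
      intro i hi
      rw [Finset.mem_range] at hi
      have hlt : (r : ℕ) - (i + 1) < (r : ℕ) := by omega
      have hlk : (r : ℕ) - (i + 1) < k := lt_trans hlt r.isLt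
      have heq : f ⟨(r : ℕ) - (i + 1), hlk⟩ = f' ⟨(r : ℕ) - (i + 1), hlk⟩ :=
        hagree ⟨(r : ℕ) - (i + 1), hlk⟩ hlt
      simp [coeffFn, hlk, heq]
    rw [Finset.sum_eq_zero h0, zero_add]
    have hcg : ∀ g : Fin k → F, coeffFn g ((r : ℕ) - 0) = g r := by
      intro g
      simp [coeffFn, r.isLt]
    rw [hcg, hcg, pow_zero, pow_one, pow_one]
    ring
  have h1 := hf r
  have h2 := hf' r
  have hsum : ∑ j : Fin s,
      (skewMul q (coeffFn (Q j))
          (coeffFn fun i : Fin k => f i * (γ ^ (j : ℕ)) ^ q ^ (i : ℕ)) r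
        - skewMul q (coeffFn (Q j))
          (coeffFn fun i : Fin k => f' i * (γ ^ (j : ℕ)) ^ q ^ (i : ℕ)) r) = 0 := by
    rw [Finset.sum_sub_distrib]
    linear_combination h1 - h2
  rw [Finset.sum_congr rfl (fun j _ => key j)] at hsum
  have hfac : (f r - f' r) *
      ∑ j : Fin s, coeffFn (Q j) 0 * (γ ^ q ^ (r : ℕ)) ^ (j : ℕ) = 0 := by
    rw [Finset.mul_sum, ← hsum]
    apply Finset.sum_congr rfl
    intro j _
    have hp : (γ ^ (j : ℕ)) ^ q ^ (r : ℕ) = (γ ^ q ^ (r : ℕ)) ^ (j : ℕ) := by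
      rw [← pow_mul, ← pow_mul, Nat.mul_comm]
    rw [hp]; ring
  rcases mul_eq_zero.1 hfac with h | h
  · exact sub_eq_zero.1 h
  · exact absurd h hR
end
end
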